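/- (Ptolemaean inequality in ∂𝐇²_ℂ, second inequality) Let p₁, p₂, p₃, p₄ ∈ ℂ³ be nonzero null vectors (⟨pᵢ,pᵢ⟩ = 0) whose pairwise Hermitian pairings are nonzero (⟨pᵢ,pⱼ⟩ ≠ 0 for i ≠ j). Setting 𝕏₁ = 𝕏(p₁,p₂,p₃,p₄) and 𝕏₂ = 𝕏(p₁,p₃,p₂,p₄), one has −1 ≤ |𝕏₁|^{1/2} − |𝕏₂|^{1/2} ≤ 1. -/

import Mathlib

/-- The Hermitian form of signature (2,1) on ℂ³:
`⟨z,w⟩ = z₁·conj(w₃) + z₂·conj(w₂) + z₃·conj(w₁)`. -/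
noncomputable def herm (z w : Fin 3 → ℂ) : ℂ :=
  z 0 * starRingEnd ℂ (w 2) + z 1 * starRingEnd ℂ (w 1) + z 2 * starRingEnd ℂ (w 0)

/-- The Korányi–Reimann complex cross-ratio. -/
noncomputable def crossRatio (p₁ p₂ p₃ p₄ : Fin 3 → ℂ) : ℂ :=
  (herm p₃ p₁ * herm p₄ p₂) / (herm p₄ p₁ * herm p₃ p₂)

lemma herm_conj (z w : Fin 3 → ℂ) : herm w z = starRingEnd ℂ (herm z w) := by
  simp only [herm, map_add, map_mul, Complex.conj_conj]
  ring

/-- Triangle inequality for sqrt sides from the quartic inequality. -/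
lemma tri (a b c : ℝ) (ha : 0 < a) (hb : 0 < b) (hc : 0 < c)
    (h : a^4 + b^4 + c^4 ≤ 2*(a^2*b^2 + b^2*c^2 + c^2*a^2)) : a ≤ b + c := by
  by_contra hcon
  push_neg at hcon
  nlinarith [mul_pos (mul_pos (mul_pos (by linarith : (0:ℝ) < a+b+c)
      (by linarith : (0:ℝ) < a-b-c)) (by linarith : (0:ℝ) < a-b+c))
      (by linarith : (0:ℝ) < a+b-c)]

set_option maxHeartbeats 1600000 in
theorem ptolemaean_inequality_boundary_second
    (p : Fin 4 → Fin 3 → ℂ)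
    (hne : ∀ i, p i ≠ 0)
    (hnull : ∀ i, herm (p i) (p i) = 0)
    (hpair : ∀ i j, i ≠ j → herm (p i) (p j) ≠ 0) :
    -1 ≤ Real.sqrt (‖crossRatio (p 0) (p 1) (p 2) (p 3)‖)
        - Real.sqrt (‖crossRatio (p 0) (p 2) (p 1) (p 3)‖)
    ∧ Real.sqrt (‖crossRatio (p 0) (p 1) (p 2) (p 3)‖)
        - Real.sqrt (‖crossRatio (p 0) (p 2) (p 1) (p 3)‖) ≤ 1 := by
  set b01 := herm (p 0) (p 1) with hb01
  set b02 := herm (p 0) (p 2) with hb02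
  set b03 := herm (p 0) (p 3) with hb03
  set b12 := herm (p 1) (p 2) with hb12
  set b13 := herm (p 1) (p 3) with hb13
  set b23 := herm (p 2) (p 3) with hb23
  set c01 := starRingEnd ℂ b01 with hc01
  set c02 := starRingEnd ℂ b02 with hc02
  set c03 := starRingEnd ℂ b03 with hc03
  set c12 := starRingEnd ℂ b12 with hc12
  set c13 := starRingEnd ℂ b13 with hc13
  set c23 := starRingEnd ℂ b23 with hc23
  -- The Gram determinant vanishes identically (4 vectors in ℂ³)
  have hfull :
      herm (p 0) (p 0) * herm (p 1) (p 1) * herm (p 2) (p 2) * herm (p 3) (p 3)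
      - herm (p 0) (p 0) * herm (p 1) (p 1) * b23 * c23
      - herm (p 0) (p 0) * b12 * c12 * herm (p 3) (p 3)
      + herm (p 0) (p 0) * b12 * b23 * c13
      + herm (p 0) (p 0) * b13 * c12 * c23
      - herm (p 0) (p 0) * b13 * herm (p 2) (p 2) * c13
      - b01 * c01 * herm (p 2) (p 2) * herm (p 3) (p 3)
      + b01 * c01 * b23 * c23
      + b01 * b12 * c02 * herm (p 3) (p 3)
      - b01 * b12 * b23 * c03
      - b01 * b13 * c02 * c23
      + b01 * b13 * herm (p 2) (p 2) * c03
      + b02 * c01 * c12 * herm (p 3) (p 3)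
      - b02 * c01 * b23 * c13
      - b02 * herm (p 1) (p 1) * c02 * herm (p 3) (p 3)
      + b02 * herm (p 1) (p 1) * b23 * c03
      + b02 * b13 * c02 * c13
      - b02 * b13 * c12 * c03
      - b03 * c01 * c12 * c23
      + b03 * c01 * herm (p 2) (p 2) * c13
      + b03 * herm (p 1) (p 1) * c02 * c23
      - b03 * herm (p 1) (p 1) * herm (p 2) (p 2) * c03
      - b03 * b12 * c02 * c13
      + b03 * b12 * c12 * c03 = 0 := by
    simp only [hb01, hb02, hb03, hb12, hb13, hb23, hc01, hc02, hc03, hc12, hc13, hc23,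
      herm, map_add, map_mul, Complex.conj_conj]
    ring
  -- Restrict to the derangement part using the null conditions
  have key : b01 * c01 * b23 * c23 + b02 * b13 * c02 * c13 + b03 * b12 * c12 * c03
      - b01 * b12 * b23 * c03 - b01 * b13 * c02 * c23 - b02 * c01 * b23 * c13
      - b02 * b13 * c12 * c03 - b03 * c01 * c12 * c23 - b03 * b12 * c02 * c13 = 0 := by
    linear_combination hfull
      - ((herm (p 1) (p 1) * herm (p 2) (p 2) * herm (p 3) (p 3)) - (herm (p 1) (p 1) * b23 * c23)
        - (b12 * c12 * herm (p 3) (p 3)) + (b12 * b23 * c13) + (b13 * c12 * c23)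
        - (b13 * herm (p 2) (p 2) * c13)) * hnull 0
      - (- (b02 * c02 * herm (p 3) (p 3)) + (b02 * b23 * c03) + (b03 * c02 * c23)
        - (b03 * herm (p 2) (p 2) * c03)) * hnull 1
      - (- (b01 * c01 * herm (p 3) (p 3)) + (b01 * b13 * c03) + (b03 * c01 * c13)) * hnull 2
      - ((b01 * b12 * c02) + (b02 * c01 * c12)) * hnull 3
  -- Take real parts:
  have hre : Complex.normSq b01 * Complex.normSq b23 + Complex.normSq b02 * Complex.normSq b13
      + Complex.normSq b03 * Complex.normSq b12
      = 2 * ((b01 * b12 * b23 * c03).re + (b01 * b13 * c02 * c23).re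
          + (b02 * b13 * c12 * c03).re) := by
    have := congrArg Complex.re key
    have e1 : (b02 * c01 * b23 * c13) = starRingEnd ℂ (b01 * b13 * c02 * c23) := by
      simp only [map_mul, hc01, hc02, hc13, hc23, Complex.conj_conj]; ring
    have e2 : (b03 * c01 * c12 * c23) = starRingEnd ℂ (b01 * b12 * b23 * c03) := by
      simp only [map_mul, hc01, hc03, hc12, hc23, Complex.conj_conj]; ring
    have e3 : (b03 * b12 * c02 * c13) = starRingEnd ℂ (b02 * b13 * c12 * c03) := by
      simp only [map_mul, hc02, hc03, hc12, hc13, Complex.conj_conj]; ring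
    rw [e1, e2, e3] at this
    simp only [Complex.sub_re, Complex.add_re, Complex.zero_re, Complex.conj_re] at this
    have n1 : (b01 * c01 * b23 * c23).re = Complex.normSq b01 * Complex.normSq b23 := by
      rw [hc01, hc23, mul_assoc (b01 * starRingEnd ℂ b01), mul_comm b23,
        show b01 * starRingEnd ℂ b01 = b01 * starRingEnd ℂ b01 from rfl]
      rw [show b01 * starRingEnd ℂ b01 * (starRingEnd ℂ b23 * b23)
          = (b01 * starRingEnd ℂ b01) * (b23 * starRingEnd ℂ b23) by ring,
        Complex.mul_conj, Complex.mul_conj]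
      push_cast
      simp
    have n2 : (b02 * b13 * c02 * c13).re = Complex.normSq b02 * Complex.normSq b13 := by
      rw [hc02, hc13,
        show b02 * b13 * starRingEnd ℂ b02 * starRingEnd ℂ b13
          = (b02 * starRingEnd ℂ b02) * (b13 * starRingEnd ℂ b13) by ring,
        Complex.mul_conj, Complex.mul_conj]
      push_cast
      simp
    have n3 : (b03 * b12 * c12 * c03).re = Complex.normSq b03 * Complex.normSq b12 := by
      rw [hc03, hc12,
        show b03 * b12 * starRingEnd ℂ b12 * starRingEnd ℂ b03
          = (b03 * starRingEnd ℂ b03) * (b12 * starRingEnd ℂ b12) by ring,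
        Complex.mul_conj, Complex.mul_conj]
      push_cast
      simp
    rw [n1, n2, n3] at this
    linarith
  -- abbreviations for absolute values
  set r01 := ‖b01‖ with hr01
  set r02 := ‖b02‖ with hr02
  set r03 := ‖b03‖ with hr03
  set r12 := ‖b12‖ with hr12
  set r13 := ‖b13‖ with hr13
  set r23 := ‖b23‖ with hr23
  have hp01 : 0 < r01 := norm_pos_iff.2 (hpair 0 1 (by decide))
  have hp02 : 0 < r02 := norm_pos_iff.2 (hpair 0 2 (by decide))
  have hp03 : 0 < r03 := norm_pos_iff.2 (hpair 0 3 (by decide))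
  have hp12 : 0 < r12 := norm_pos_iff.2 (hpair 1 2 (by decide))
  have hp13 : 0 < r13 := norm_pos_iff.2 (hpair 1 3 (by decide))
  have hp23 : 0 < r23 := norm_pos_iff.2 (hpair 2 3 (by decide))
  -- bound real parts by absolute values
  have habs : ∀ z : ℂ, z.re ≤ ‖z‖ := fun z => Complex.re_le_norm z
  have a1 : (b01 * b12 * b23 * c03).re ≤ r01 * r12 * r23 * r03 := by
    calc (b01 * b12 * b23 * c03).re ≤ ‖b01 * b12 * b23 * c03‖ := habs _
    _ = r01 * r12 * r23 * r03 := by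
        simp [map_mul, hc03, Complex.norm_conj]
        rfl
  have a2 : (b01 * b13 * c02 * c23).re ≤ r01 * r13 * r02 * r23 := by
    calc (b01 * b13 * c02 * c23).re ≤ ‖b01 * b13 * c02 * c23‖ := habs _
    _ = r01 * r13 * r02 * r23 := by
        simp [map_mul, hc02, hc23, Complex.norm_conj]
        rfl
  have a3 : (b02 * b13 * c12 * c03).re ≤ r02 * r13 * r12 * r03 := by
    calc (b02 * b13 * c12 * c03).re ≤ ‖b02 * b13 * c12 * c03‖ := habs _
    _ = r02 * r13 * r12 * r03 := by
        simp [map_mul, hc12, hc03, Complex.norm_conj]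
        rfl
  have hnormSq : ∀ z : ℂ, Complex.normSq z = ‖z‖^2 := fun z =>
    (Complex.sq_norm z).symm
  rw [hnormSq, hnormSq, hnormSq, hnormSq, hnormSq, hnormSq] at hre
  -- quadratic quantities
  set A := r02 * r13 with hA
  set B := r01 * r23 with hB
  set C := r03 * r12 with hC
  have hApos : 0 < A := mul_pos hp02 hp13
  have hBpos : 0 < B := mul_pos hp01 hp23
  have hCpos : 0 < C := mul_pos hp03 hp12
  have hquad : A^2 + B^2 + C^2 ≤ 2*(A*B + B*C + C*A) := by nlinarith [a1, a2, a3, hre]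
  set a := Real.sqrt A with ha
  set b := Real.sqrt B with hbb
  set c := Real.sqrt C with hcc
  have hapos : 0 < a := Real.sqrt_pos.2 hApos
  have hbpos : 0 < b := Real.sqrt_pos.2 hBpos
  have hcpos : 0 < c := Real.sqrt_pos.2 hCpos
  have ha2 : a^2 = A := Real.sq_sqrt hApos.le
  have hb2 : b^2 = B := Real.sq_sqrt hBpos.le
  have hc2 : c^2 = C := Real.sq_sqrt hCpos.le
  have hquartic : a^4 + b^4 + c^4 ≤ 2*(a^2*b^2 + b^2*c^2 + c^2*a^2) := by
    have e : ∀ x : ℝ, x^4 = (x^2)^2 := fun x => by ring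
    rw [e a, e b, e c, ha2, hb2, hc2]
    nlinarith [hquad]
  have t1 : a ≤ b + c := tri a b c hapos hbpos hcpos hquartic
  have t2 : b ≤ a + c := tri b a c hbpos hapos hcpos (by linarith [hquartic])
  -- compute the cross-ratio absolute values
  have hX1 : ‖crossRatio (p 0) (p 1) (p 2) (p 3)‖ = A / C := by
    rw [crossRatio, norm_div, norm_mul, norm_mul]
    rw [herm_conj (p 0) (p 2), herm_conj (p 1) (p 3), herm_conj (p 0) (p 3),
      herm_conj (p 1) (p 2)]
    simp only [Complex.norm_conj]
    rfl
  have hX2 : ‖crossRatio (p 0) (p 2) (p 1) (p 3)‖ = B / C := by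
    rw [crossRatio, norm_div, norm_mul, norm_mul]
    rw [herm_conj (p 0) (p 1), herm_conj (p 2) (p 3), herm_conj (p 0) (p 3),
      herm_conj (p 2) (p 1)]
    simp only [Complex.norm_conj]
    rw [herm_conj (p 1) (p 2), Complex.norm_conj]
  have s1 : Real.sqrt (A / C) = a / c := by rw [Real.sqrt_div hApos.le]
  have s2 : Real.sqrt (B / C) = b / c := by rw [Real.sqrt_div hBpos.le]
  rw [hX1, hX2, s1, s2, div_sub_div_same]
  constructor
  · exact (le_div_iff₀ hcpos).2 (by linarith)
  · exact (div_le_one hcpos).2 (by linarith)
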